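/- Potential step inequality for miner transactions: assume r(x0) = p_x/p_y. If a miner transaction Sell(X,q) (q ≥ 0) is executed at a state (x̄, F_y(x̄)) with x̄ ≤ x0, producing the new reserve x̂ = x̄ + (1−f)q and miner profit ΔU = (F_y(x̄) − F_y(x̂))·p_y − q·p_x, then ΔU + φ(x̂) − φ(x̄) ≤ 0. -/

import Mathlib

/-- The potential function `φ`:
`φ(x) = (x − R_x)·p_x + ((F_y(x) − F_y(R_x))/(1−f))·p_y` if `x > R_x`;
`φ(x) = ((x − L_x)/(1−f))·p_x + (F_y(x) − F_y(L_x))·p_y` if `x < L_x`;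
`φ(x) = 0` if `x ∈ [L_x, R_x]`. -/
noncomputable def phi (Fy : ℝ → ℝ) (f px py Lx Rx : ℝ) (x : ℝ) : ℝ :=
  if Rx < x then (x - Rx) * px + ((Fy x - Fy Rx) / (1 - f)) * py
  else if x < Lx then ((x - Lx) / (1 - f)) * px + (Fy x - Fy Lx) * py
  else 0

/-- Key monotonicity lemma: the combined potential
`H x = φ(x) − Fy(x)·py − x·px/(1−f)` is nonincreasing on `(0,∞)`. -/
lemma phi_key (Fy : ℝ → ℝ) (f px py Lx Rx : ℝ)
    (hf0 : 0 ≤ f) (hf1 : f < 1)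
    (hpx : 0 < px) (hpy : 0 < py)
    (hFy_diff : ∀ x ∈ Set.Ioi (0 : ℝ), DifferentiableAt ℝ Fy x)
    (hr_pos : ∀ x ∈ Set.Ioi (0 : ℝ), 0 < -deriv Fy x)
    (hr_anti : StrictAntiOn (fun x => -deriv Fy x) (Set.Ioi 0))
    (hLx_pos : 0 < Lx) (hLx : -deriv Fy Lx = (1 / (1 - f)) * (px / py))
    (hRx_pos : 0 < Rx) (hRx : -deriv Fy Rx = (1 - f) * (px / py))
    (a b : ℝ) (ha : 0 < a) (hab : a ≤ b) :
    phi Fy f px py Lx Rx b - Fy b * py - b * (px / (1 - f))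
      ≤ phi Fy f px py Lx Rx a - Fy a * py - a * (px / (1 - f)) := by
  have h1f : 0 < 1 - f := by linarith
  have hpc : 0 < px / py := div_pos hpx hpy
  -- Lx ≤ Rx
  have hLR : Lx ≤ Rx := by
    by_contra hlt
    push_neg at hlt
    have h2 := hr_anti (Set.mem_Ioi.2 hRx_pos) (Set.mem_Ioi.2 hLx_pos) hlt
    simp only at h2
    rw [hLx, hRx] at h2
    have h3 := mul_lt_mul_of_pos_right h2 h1f
    have h4 : (1 / (1 - f)) * (px / py) * (1 - f) = px / py := by field_simp
    rw [h4] at h3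
    nlinarith [mul_nonneg (mul_nonneg hf0 (by linarith : (0:ℝ) ≤ 2 - f)) hpc.le]
  set H : ℝ → ℝ := fun x =>
    phi Fy f px py Lx Rx x - Fy x * py - x * (px / (1 - f)) with hH
  show H b ≤ H a
  -- H is constant on (0, Lx]
  have hconst : ∀ x, 0 < x → x ≤ Lx →
      H x = -(Lx * (px / (1 - f))) - Fy Lx * py := by
    intro x hx hxL
    rcases eq_or_lt_of_le hxL with h | h
    · subst h
      simp only [hH, phi, if_neg (not_lt.2 hLR), if_neg (lt_irrefl x)]
      ring
    · simp only [hH, phi, if_neg (not_lt.2 (h.le.trans hLR)), if_pos h]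
      field_simp
      ring
  -- derivative facts
  have hdFy : ∀ x ∈ Set.Ioi (0 : ℝ), HasDerivAt Fy (deriv Fy x) x :=
    fun x hx => (hFy_diff x hx).hasDerivAt
  -- H is antitone on [Lx, Rx]
  have hA2 : AntitoneOn H (Set.Icc Lx Rx) := by
    set g2 : ℝ → ℝ := fun x => -(Fy x * py) - x * (px / (1 - f)) with hg2
    have hg2d : ∀ x ∈ Set.Ioi (0 : ℝ),
        HasDerivAt g2 (-(deriv Fy x) * py - px / (1 - f)) x := by
      intro x hx
      have h2 := (((hdFy x hx).mul_const py).neg).sub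
        ((hasDerivAt_id x).mul_const (px / (1 - f)))
      refine h2.congr_deriv ?_
      ring
    have hg2anti : AntitoneOn g2 (Set.Icc Lx Rx) := by
      apply antitoneOn_of_deriv_nonpos (convex_Icc Lx Rx)
      · intro x hx
        exact ((hg2d x (Set.mem_Ioi.2 (lt_of_lt_of_le hLx_pos hx.1))).differentiableAt).continuousAt.continuousWithinAt
      · intro x hx
        rw [interior_Icc] at hx
        exact ((hg2d x (Set.mem_Ioi.2 (hLx_pos.trans hx.1))).differentiableAt).differentiableWithinAt
      · intro x hx
        rw [interior_Icc] at hx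
        have hx0 : x ∈ Set.Ioi (0 : ℝ) := Set.mem_Ioi.2 (hLx_pos.trans hx.1)
        rw [(hg2d x hx0).deriv]
        have h5 := hr_anti (Set.mem_Ioi.2 hLx_pos) hx0 hx.1
        simp only at h5
        rw [hLx] at h5
        have h6 := mul_lt_mul_of_pos_right h5 hpy
        have h7 : (1 / (1 - f)) * (px / py) * py = px / (1 - f) := by field_simp
        rw [h7] at h6
        linarith
    intro x hx y hy hxy
    have hx0 : H x = g2 x := by
      simp only [hH, hg2, phi, if_neg (not_lt.2 hx.2), if_neg (not_lt.2 hx.1)]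
      ring
    have hy0 : H y = g2 y := by
      simp only [hH, hg2, phi, if_neg (not_lt.2 hy.2), if_neg (not_lt.2 hy.1)]
      ring
    rw [hx0, hy0]
    exact hg2anti hx hy hxy
  -- H is antitone on [Rx, ∞)
  have hA3 : AntitoneOn H (Set.Ici Rx) := by
    set g3 : ℝ → ℝ := fun x => (x - Rx) * px + ((Fy x - Fy Rx) / (1 - f)) * py
      - Fy x * py - x * (px / (1 - f)) with hg3
    have hg3d : ∀ x ∈ Set.Ioi (0 : ℝ),
        HasDerivAt g3 (px + (deriv Fy x / (1 - f)) * py - deriv Fy x * py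
          - px / (1 - f)) x := by
      intro x hx
      have h1 := ((hasDerivAt_id x).sub_const Rx).mul_const px
      have h2 := (((hdFy x hx).sub_const (Fy Rx)).div_const (1 - f)).mul_const py
      have h3 := (((h1.add h2).sub ((hdFy x hx).mul_const py)).sub
        ((hasDerivAt_id x).mul_const (px / (1 - f))))
      refine h3.congr_deriv ?_
      ring
    have hg3anti : AntitoneOn g3 (Set.Ici Rx) := by
      apply antitoneOn_of_deriv_nonpos (convex_Ici Rx)
      · intro x hx
        exact ((hg3d x (Set.mem_Ioi.2 (lt_of_lt_of_le hRx_pos hx))).differentiableAt).continuousAt.continuousWithinAt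
      · intro x hx
        rw [interior_Ici] at hx
        exact ((hg3d x (Set.mem_Ioi.2 (hRx_pos.trans hx))).differentiableAt).differentiableWithinAt
      · intro x hx
        rw [interior_Ici] at hx
        have hx0 : x ∈ Set.Ioi (0 : ℝ) := Set.mem_Ioi.2 (hRx_pos.trans hx)
        rw [(hg3d x hx0).deriv]
        have hd := hr_pos x hx0
        have heq : (px + (deriv Fy x / (1 - f)) * py - deriv Fy x * py
            - px / (1 - f)) * (1 - f) = -f * px + f * (deriv Fy x * py) := by
          field_simp
          ring
        have h9 : -f * px + f * (deriv Fy x * py) ≤ 0 := by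
          nlinarith [mul_nonneg hf0 hpx.le, mul_nonneg hf0 (mul_pos hd hpy).le]
        nlinarith [h1f]
    intro x hx y hy hxy
    have hval : ∀ z ∈ Set.Ici Rx, H z = g3 z := by
      intro z hz
      rcases eq_or_lt_of_le (Set.mem_Ici.1 hz) with h | h
      · simp only [hH, hg3, phi, ← h, if_neg (lt_irrefl Rx), if_neg (not_lt.2 hLR)]
        ring
      · simp only [hH, hg3, phi, if_pos h]
    rw [hval x hx, hval y hy]
    exact hg3anti hx hy hxy
  have hb : 0 < b := lt_of_lt_of_le ha hab
  -- combine
  by_cases hbL : b ≤ Lx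
  · rw [hconst b hb hbL, hconst a ha (hab.trans hbL)]
  · push_neg at hbL
    -- helper: for 0 < a ≤ Rx with a ≤ z, z ∈ [Lx,Rx]: H z ≤ H a
    have mid : ∀ z, Lx ≤ z → z ≤ Rx → a ≤ z → H z ≤ H a := by
      intro z hzL hzR haz
      by_cases haL : Lx ≤ a
      · exact hA2 ⟨haL, haz.trans hzR⟩ ⟨hzL, hzR⟩ haz
      · push_neg at haL
        have h1 := hA2 ⟨le_refl Lx, hLR⟩ ⟨hzL, hzR⟩ hzL
        rw [hconst Lx hLx_pos le_rfl] at h1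
        rw [hconst a ha haL.le]
        exact h1
    by_cases hbR : b ≤ Rx
    · exact mid b hbL.le hbR hab
    · push_neg at hbR
      have h1 := hA3 (Set.mem_Ici.2 le_rfl) (Set.mem_Ici.2 hbR.le) hbR.le
      by_cases haR : Rx ≤ a
      · exact hA3 (Set.mem_Ici.2 haR) (Set.mem_Ici.2 (haR.trans hab)) hab
      · push_neg at haR
        have h2 := mid Rx hLR le_rfl haR.le
        linarith

theorem phi_step_miner
    (Fy : ℝ → ℝ) (f px py Lx Rx x0 xbar q : ℝ)
    (hf0 : 0 ≤ f) (hf1 : f < 1)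
    (hpx : 0 < px) (hpy : 0 < py)
    (hFy_diff : ∀ x ∈ Set.Ioi (0 : ℝ), DifferentiableAt ℝ Fy x)
    (hFy_anti : StrictAntiOn Fy (Set.Ioi 0))
    (hr_pos : ∀ x ∈ Set.Ioi (0 : ℝ), 0 < -deriv Fy x)
    (hr_anti : StrictAntiOn (fun x => -deriv Fy x) (Set.Ioi 0))
    (hLx_pos : 0 < Lx) (hLx : -deriv Fy Lx = (1 / (1 - f)) * (px / py))
    (hRx_pos : 0 < Rx) (hRx : -deriv Fy Rx = (1 - f) * (px / py))
    (hx0_pos : 0 < x0) (hx0 : -deriv Fy x0 = px / py)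
    (hxbar_pos : 0 < xbar) (hxbar : xbar ≤ x0)
    (hq : 0 ≤ q) :
    ((Fy xbar - Fy (xbar + (1 - f) * q)) * py - q * px) +
        phi Fy f px py Lx Rx (xbar + (1 - f) * q) - phi Fy f px py Lx Rx xbar ≤ 0 := by
  have h1f : 0 < 1 - f := by linarith
  have hxh : xbar ≤ xbar + (1 - f) * q :=
    le_add_of_nonneg_right (mul_nonneg h1f.le hq)
  have key := phi_key Fy f px py Lx Rx hf0 hf1 hpx hpy hFy_diff hr_pos hr_anti
    hLx_pos hLx hRx_pos hRx xbar (xbar + (1 - f) * q) hxbar_pos hxh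
  have heq : (xbar + (1 - f) * q) * (px / (1 - f)) - xbar * (px / (1 - f))
      = q * px := by
    field_simp
    ring
  linarith
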